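/- Let p > 1, let φ, ψ : ℝ^d → [0,∞) be measurable, and let ω : ℝ^d → (0,∞) be a measurable weight such that for every x the oscillation of ω on the ball B_ε(x) is at most ω(x)/2. Then ∫_{ℝ^d} (⨍_{B_ε(x)} φψ dy)² dx ≤ C (∫_{ℝ^d} ψ^{2p} ω dx)^{1/p} · (∫_{ℝ^d} ω^{-1/(p-1)} (⨍_{B_ε(x)} φ² dy)^{p/(p-1)} dx)^{(p-1)/p}, where C depends only on p and d. -/

import Mathlib

open MeasureTheory Metric
open scoped ENNReal

lemma aux_ker_meas {d : ℕ} (ε : ℝ) (g : EuclideanSpace ℝ (Fin d) → ℝ≥0∞) (hg : Measurable g) :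
    Measurable (Function.uncurry fun x y : EuclideanSpace ℝ (Fin d) => (ball x ε).indicator g y) := by
  have h : (Function.uncurry fun x y : EuclideanSpace ℝ (Fin d) => (ball x ε).indicator g y)
      = {z : EuclideanSpace ℝ (Fin d) × EuclideanSpace ℝ (Fin d) | dist z.2 z.1 < ε}.indicator
          (fun z => g z.2) := by
    funext z
    simp only [Function.uncurry, Set.indicator_apply, mem_ball, Set.mem_setOf_eq]
    rfl
  rw [h]
  exact (hg.comp measurable_snd).indicator
    (measurableSet_lt (measurable_dist.comp (measurable_snd.prodMk measurable_fst))
      measurable_const)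

lemma aux_meas_avg {d : ℕ} (ε : ℝ) (g : EuclideanSpace ℝ (Fin d) → ℝ≥0∞) (hg : Measurable g) :
    Measurable (fun x => ∫⁻ y in ball x ε, g y) := by
  have := (aux_ker_meas ε g hg).lintegral_prod_right' (ν := volume)
  simpa only [Function.uncurry, lintegral_indicator measurableSet_ball] using this

lemma aux_fubini {d : ℕ} {ε : ℝ} (hε : 0 < ε) (g : EuclideanSpace ℝ (Fin d) → ℝ≥0∞)
    (hg : Measurable g) :
    (∫⁻ x, ∫⁻ y in ball x ε, g y) = volume (ball (0 : EuclideanSpace ℝ (Fin d)) ε) * ∫⁻ y, g y := by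
  set V := volume (ball (0 : EuclideanSpace ℝ (Fin d)) ε) with hV
  have hVx : ∀ x : EuclideanSpace ℝ (Fin d), volume (ball x ε) = V := fun x =>
    Measure.addHaar_ball_center volume x ε
  have hVtop : V ≠ ⊤ := measure_ball_lt_top.ne
  calc (∫⁻ x, ∫⁻ y in ball x ε, g y)
      = ∫⁻ x, ∫⁻ y, (ball x ε).indicator g y := by
        simp_rw [lintegral_indicator measurableSet_ball]
    _ = ∫⁻ y, ∫⁻ x, (ball x ε).indicator g y := lintegral_lintegral_swap
        (aux_ker_meas ε g hg).aemeasurable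
    _ = ∫⁻ y, g y * V := by
        refine lintegral_congr fun y => ?_
        have h1 : ∀ x : EuclideanSpace ℝ (Fin d),
            (ball x ε).indicator g y = (ball y ε).indicator (fun _ => g y) x := by
          intro x
          by_cases h : dist y x < ε
          · rw [Set.indicator_of_mem (by rwa [mem_ball]),
              Set.indicator_of_mem (by rwa [mem_ball, dist_comm])]
          · rw [Set.indicator_of_notMem (by rwa [mem_ball]),
              Set.indicator_of_notMem (by rwa [mem_ball, dist_comm])]
        rw [show (fun x : EuclideanSpace ℝ (Fin d) => (ball x ε).indicator g y)
            = fun x => (ball y ε).indicator (fun _ => g y) x from funext h1]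
        rw [lintegral_indicator measurableSet_ball, setLIntegral_const, hVx y]
    _ = V * ∫⁻ y, g y := by rw [lintegral_mul_const' V g hVtop, mul_comm]


/-- Hölder-type estimate for averaged products: for `p > 1` and a weight `ω`
with small oscillation on `ε`-balls,
`∫ (⨍_{B_ε(x)} φψ)² dx ≤ C (∫ ψ^{2p} ω)^{1/p} (∫ ω^{-1/(p-1)} (⨍_{B_ε(x)} φ²)^{p/(p-1)})^{(p-1)/p}`,
with `C = C(d, p)`. -/
theorem stmt0 (d : ℕ) (p : ℝ) (hd : 1 ≤ d) (hp : 1 < p) :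
    ∃ C : ℝ, 0 < C ∧
    ∀ (ε : ℝ) (φ ψ ω : EuclideanSpace ℝ (Fin d) → ℝ≥0∞),
      0 < ε →
      Measurable φ → Measurable ψ → Measurable ω →
      (∀ x, 0 < ω x ∧ ω x < ⊤) →
      (∀ x : EuclideanSpace ℝ (Fin d), ∀ y ∈ ball x ε, ∀ z ∈ ball x ε,
        ω y ≤ ω z + ω x / 2) →
      (∫⁻ x, ((∫⁻ y in ball x ε, φ y * ψ y) / volume (ball x ε)) ^ (2 : ℝ))
        ≤ ENNReal.ofReal C *
          (∫⁻ x, (ψ x) ^ (2 * p) * ω x) ^ (1 / p) *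
          (∫⁻ x, (ω x) ^ (-(1 / (p - 1))) *
            ((∫⁻ y in ball x ε, (φ y) ^ (2 : ℝ)) / volume (ball x ε))
              ^ (p / (p - 1))) ^ ((p - 1) / p) := by
  have hp0 : (0 : ℝ) < p := lt_trans one_pos hp
  set q : ℝ := p / (p - 1) with hqdef
  have hpq : p.HolderConjugate q := Real.HolderConjugate.conjExponent hp
  have hq1 : 1 < q := hpq.symm.lt
  have hq0 : (0 : ℝ) < q := lt_trans one_pos hq1
  have hsum : 1 / p + 1 / q = 1 := by
    rw [one_div, one_div]; exact hpq.inv_add_inv_eq_one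
  refine ⟨4, by norm_num, ?_⟩
  intro ε φ ψ ω hε hφ hψ hω hωpos hosc
  set V := volume (ball (0 : EuclideanSpace ℝ (Fin d)) ε) with hVdef
  have hVx : ∀ x : EuclideanSpace ℝ (Fin d), volume (ball x ε) = V := fun x =>
    Measure.addHaar_ball_center volume x ε
  have hV0 : V ≠ 0 := (measure_ball_pos volume _ hε).ne'
  have hVtop : V ≠ ⊤ := measure_ball_lt_top.ne
  -- the two functions for the final Hölder step
  set F : EuclideanSpace ℝ (Fin d) → ℝ≥0∞ :=
    fun x => ((∫⁻ y in ball x ε, ψ y ^ (2 * p) * ω y) / V) ^ (1 / p) with hFdef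
  set G : EuclideanSpace ℝ (Fin d) → ℝ≥0∞ :=
    fun x => (ω x) ^ (-(1 / p)) * ((∫⁻ y in ball x ε, φ y ^ (2 : ℝ)) / V) with hGdef
  have hψ2p : Measurable fun y => ψ y ^ (2 * p) * ω y :=
    (ENNReal.continuous_rpow_const.measurable.comp hψ).mul hω
  have hφ2 : Measurable fun y => φ y ^ (2 : ℝ) :=
    ENNReal.continuous_rpow_const.measurable.comp hφ
  have hF : Measurable F := by
    apply ENNReal.continuous_rpow_const.measurable.comp
    simp only [div_eq_mul_inv]
    exact (aux_meas_avg ε _ hψ2p).mul_const _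
  have hG : Measurable G := by
    apply (ENNReal.continuous_rpow_const.measurable.comp hω).mul
    simp only [div_eq_mul_inv]
    exact (aux_meas_avg ε _ hφ2).mul_const _
  -- pointwise key estimate
  have key : ∀ x, ((∫⁻ y in ball x ε, φ y * ψ y) / V) ^ (2 : ℝ) ≤ 4 * (F x * G x) := by
    intro x
    obtain ⟨hw0, hwtop⟩ := hωpos x
    set A := ∫⁻ y in ball x ε, φ y * ψ y with hA
    set Iφ := ∫⁻ y in ball x ε, φ y ^ (2 : ℝ) with hIφ
    set Iψ := ∫⁻ y in ball x ε, ψ y ^ (2 : ℝ) with hIψ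
    set J := ∫⁻ y in ball x ε, ψ y ^ (2 : ℝ) * ω y with hJ
    set K := ∫⁻ y in ball x ε, ψ y ^ (2 * p) * ω y with hK
    set W := ∫⁻ y in ball x ε, ω y with hW
    have hωlow : ∀ y ∈ ball x ε, ω x ≤ 2 * ω y := by
      intro y hy
      have h1 : ω x ≤ ω y + ω x / 2 := hosc x x (mem_ball_self hε) y hy
      have h2 : ω x / 2 ≤ ω y := by
        have h1' : ω x / 2 + ω x / 2 ≤ ω y + ω x / 2 := by
          rw [ENNReal.add_halves]; exact h1
        exact (ENNReal.add_le_add_iff_right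
          (ENNReal.div_lt_top hwtop.ne two_ne_zero).ne).1 h1'
      calc ω x = ω x / 2 + ω x / 2 := (ENNReal.add_halves _).symm
        _ ≤ ω y + ω y := add_le_add h2 h2
        _ = 2 * ω y := (two_mul _).symm
    -- Step 1: Cauchy–Schwarz
    have step1 : A ≤ Iφ ^ (1 / 2 : ℝ) * Iψ ^ (1 / 2 : ℝ) := by
      have conj22 : (2 : ℝ).HolderConjugate 2 := Real.HolderConjugate.two_two
      have := ENNReal.lintegral_mul_le_Lp_mul_Lq (volume.restrict (ball x ε)) conj22
        hφ.aemeasurable hψ.aemeasurable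
      rw [hA, hIφ, hIψ]
      simpa using this
    have step1' : A ^ (2 : ℝ) ≤ Iφ * Iψ := by
      calc A ^ (2 : ℝ) ≤ (Iφ ^ (1/2 : ℝ) * Iψ ^ (1/2 : ℝ)) ^ (2 : ℝ) :=
            ENNReal.rpow_le_rpow step1 (by norm_num)
        _ = Iφ * Iψ := by
            rw [ENNReal.mul_rpow_of_nonneg _ _ (by norm_num : (0:ℝ) ≤ 2),
              ← ENNReal.rpow_mul, ← ENNReal.rpow_mul]
            norm_num
    -- Step 2
    have step2 : Iψ ≤ 2 * J * (ω x)⁻¹ := by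
      have e1 : Iψ * ω x = ∫⁻ y in ball x ε, ψ y ^ (2 : ℝ) * ω x :=
        (lintegral_mul_const' (ω x) _ hwtop.ne).symm
      have e2 : (∫⁻ y in ball x ε, ψ y ^ (2 : ℝ) * ω x)
          ≤ ∫⁻ y in ball x ε, 2 * (ψ y ^ (2 : ℝ) * ω y) := by
        refine setLIntegral_mono' measurableSet_ball fun y hy => ?_
        calc ψ y ^ (2:ℝ) * ω x ≤ ψ y ^ (2:ℝ) * (2 * ω y) := mul_le_mul_right (hωlow y hy) _
          _ = 2 * (ψ y ^ (2:ℝ) * ω y) := by ring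
      have e3 : (∫⁻ y in ball x ε, 2 * (ψ y ^ (2 : ℝ) * ω y)) = 2 * J :=
        lintegral_const_mul' 2 _ (by simp)
      have e4 : Iψ * ω x ≤ 2 * J := by rw [e1, ← e3]; exact e2
      have := (ENNReal.le_div_iff_mul_le (Or.inl hw0.ne') (Or.inl hwtop.ne)).2 e4
      rwa [div_eq_mul_inv] at this
    -- Step 3: Hölder on the ball
    have step3 : J ≤ K ^ (1 / p) * W ^ (1 / q) := by
      have hf : Measurable fun y => ψ y ^ (2 : ℝ) * ω y ^ (1 / p : ℝ) :=
        (ENNReal.continuous_rpow_const.measurable.comp hψ).mul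
          (ENNReal.continuous_rpow_const.measurable.comp hω)
      have hg : Measurable fun y => ω y ^ (1 / q : ℝ) :=
        ENNReal.continuous_rpow_const.measurable.comp hω
      have holder := ENNReal.lintegral_mul_le_Lp_mul_Lq (volume.restrict (ball x ε)) hpq
        hf.aemeasurable hg.aemeasurable
      have lhs_eq : (∫⁻ y in ball x ε,
          ((fun y => ψ y ^ (2:ℝ) * ω y ^ (1/p : ℝ)) * fun y => ω y ^ (1/q : ℝ)) y) = J := by
        refine setLIntegral_congr_fun measurableSet_ball (
          fun y hy => ?_)
        obtain ⟨hy0, hytop⟩ := hωpos y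
        simp only [Pi.mul_apply]
        rw [mul_assoc, ← ENNReal.rpow_add _ _ hy0.ne' hytop.ne, hsum, ENNReal.rpow_one]
      have rhs1 : (∫⁻ y in ball x ε, ((fun y => ψ y ^ (2:ℝ) * ω y ^ (1/p : ℝ)) y) ^ p) = K := by
        refine setLIntegral_congr_fun measurableSet_ball (
          fun y hy => ?_)
        rw [ENNReal.mul_rpow_of_nonneg _ _ hp0.le, ← ENNReal.rpow_mul, ← ENNReal.rpow_mul,
          one_div, inv_mul_cancel₀ hp0.ne', ENNReal.rpow_one]
      have rhs2 : (∫⁻ y in ball x ε, ((fun y => ω y ^ (1/q : ℝ)) y) ^ q) = W := by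
        refine setLIntegral_congr_fun measurableSet_ball (
          fun y hy => ?_)
        rw [← ENNReal.rpow_mul, one_div, inv_mul_cancel₀ hq0.ne', ENNReal.rpow_one]
      rw [lhs_eq, rhs1, rhs2] at holder
      exact holder
    -- Step 4: bound on ∫_B ω
    have step4 : W ^ (1 / q : ℝ) ≤ 2 * (ω x) ^ (1 / q : ℝ) * V ^ (1 / q : ℝ) := by
      have hWb : W ≤ 2 * ω x * V := by
        have h1 : W ≤ ∫⁻ _ in ball x ε, 2 * ω x := by
          refine setLIntegral_mono' measurableSet_ball fun y hy => ?_
          calc ω y ≤ ω x + ω x / 2 := hosc x y hy x (mem_ball_self hε)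
            _ ≤ ω x + ω x := add_le_add_right ENNReal.half_le_self _
            _ = 2 * ω x := (two_mul _).symm
        calc W ≤ ∫⁻ _ in ball x ε, 2 * ω x := h1
          _ = 2 * ω x * V := by rw [setLIntegral_const, hVx x]
      calc W ^ (1/q : ℝ) ≤ (2 * ω x * V) ^ (1/q : ℝ) :=
            ENNReal.rpow_le_rpow hWb (by positivity)
        _ = (2:ℝ≥0∞) ^ (1/q : ℝ) * (ω x) ^ (1/q : ℝ) * V ^ (1/q : ℝ) := by
            rw [ENNReal.mul_rpow_of_nonneg _ _ (by positivity : (0:ℝ) ≤ 1/q),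
              ENNReal.mul_rpow_of_nonneg _ _ (by positivity : (0:ℝ) ≤ 1/q)]
        _ ≤ 2 * (ω x) ^ (1/q : ℝ) * V ^ (1/q : ℝ) := by
            have h2 : (2:ℝ≥0∞) ^ (1/q : ℝ) ≤ 2 := by
              calc (2:ℝ≥0∞) ^ (1/q : ℝ) ≤ (2:ℝ≥0∞) ^ (1:ℝ) :=
                    ENNReal.rpow_le_rpow_of_exponent_le one_le_two
                      (by rw [div_le_one hq0]; exact hq1.le)
                _ = 2 := ENNReal.rpow_one 2
            exact mul_le_mul_left (mul_le_mul_left h2 _) _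
    -- assemble
    have hA2 : A ^ (2:ℝ) ≤ 4 * K ^ (1/p) * Iφ * ((ω x) ^ (1/q : ℝ) * (ω x)⁻¹) * V ^ (1/q : ℝ) := by
      calc A ^ (2:ℝ) ≤ Iφ * Iψ := step1'
        _ ≤ Iφ * (2 * J * (ω x)⁻¹) := mul_le_mul_right step2 _
        _ ≤ Iφ * (2 * (K ^ (1/p) * W ^ (1/q)) * (ω x)⁻¹) := by gcongr
        _ ≤ Iφ * (2 * (K ^ (1/p) * (2 * (ω x) ^ (1/q : ℝ) * V ^ (1/q : ℝ))) * (ω x)⁻¹) := by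
            gcongr
        _ = 4 * K ^ (1/p) * Iφ * ((ω x) ^ (1/q : ℝ) * (ω x)⁻¹) * V ^ (1/q : ℝ) := by ring
    have hwq : (ω x) ^ (1/q : ℝ) * (ω x)⁻¹ = (ω x) ^ (-(1/p) : ℝ) := by
      rw [← ENNReal.rpow_neg_one (ω x), ← ENNReal.rpow_add _ _ hw0.ne' hwtop.ne]
      congr 1
      linarith [hsum]
    have hVsplit : V ^ (1/q : ℝ) * V ^ (-2 : ℝ) = V ^ (-(1/p) : ℝ) * V ^ (-1 : ℝ) := by
      rw [← ENNReal.rpow_add _ _ hV0 hVtop, ← ENNReal.rpow_add _ _ hV0 hVtop]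
      congr 1
      linarith [hsum]
    calc (A / V) ^ (2:ℝ) = A ^ (2:ℝ) * V ^ (-2 : ℝ) := by
          rw [ENNReal.div_rpow_of_nonneg _ _ (by norm_num : (0:ℝ) ≤ 2), div_eq_mul_inv,
            ← ENNReal.rpow_neg_one (V ^ (2:ℝ)), ← ENNReal.rpow_mul]
          norm_num
      _ ≤ 4 * K ^ (1/p) * Iφ * ((ω x) ^ (1/q : ℝ) * (ω x)⁻¹) * V ^ (1/q : ℝ) * V ^ (-2 : ℝ) :=
          mul_le_mul_left hA2 _
      _ = 4 * K ^ (1/p) * Iφ * (ω x) ^ (-(1/p) : ℝ) * (V ^ (1/q : ℝ) * V ^ (-2 : ℝ)) := by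
          rw [hwq]; ring
      _ = 4 * (F x * G x) := by
          rw [hVsplit, hFdef, hGdef]
          simp only []
          rw [ENNReal.div_rpow_of_nonneg _ _ (by positivity : (0:ℝ) ≤ 1/p),
            div_eq_mul_inv (K ^ (1/p)), ← ENNReal.rpow_neg_one (V ^ (1/p : ℝ)),
            ← ENNReal.rpow_mul, div_eq_mul_inv Iφ V, ← ENNReal.rpow_neg_one V]
          rw [show (1/p : ℝ) * (-1) = -(1/p) from by ring]
          ring
  -- main chain
  simp only [hVx]
  have holder := ENNReal.lintegral_mul_le_Lp_mul_Lq (volume : Measure (EuclideanSpace ℝ (Fin d)))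
    hpq hF.aemeasurable hG.aemeasurable
  have hFp : (∫⁻ x, F x ^ p) = ∫⁻ x, ψ x ^ (2 * p) * ω x := by
    have e1 : ∀ x : EuclideanSpace ℝ (Fin d),
        F x ^ p = (∫⁻ y in ball x ε, ψ y ^ (2 * p) * ω y) * V⁻¹ := by
      intro x
      rw [hFdef]
      simp only []
      rw [← ENNReal.rpow_mul, one_div, inv_mul_cancel₀ hp0.ne', ENNReal.rpow_one,
        div_eq_mul_inv]
    simp_rw [e1]
    rw [lintegral_mul_const' V⁻¹ _ (ENNReal.inv_ne_top.2 hV0), aux_fubini hε _ hψ2p,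
      mul_comm V, mul_assoc, ENNReal.mul_inv_cancel hV0 hVtop, mul_one]
  have hGq : (∫⁻ x, G x ^ q) = ∫⁻ x, (ω x) ^ (-(1 / (p - 1))) *
      ((∫⁻ y in ball x ε, φ y ^ (2 : ℝ)) / V) ^ q := by
    refine lintegral_congr fun x => ?_
    rw [hGdef]
    simp only []
    rw [ENNReal.mul_rpow_of_nonneg _ _ hq0.le, ← ENNReal.rpow_mul]
    congr 2
    rw [hqdef]
    field_simp
  calc (∫⁻ x, ((∫⁻ y in ball x ε, φ y * ψ y) / V) ^ (2 : ℝ))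
      ≤ ∫⁻ x, 4 * (F x * G x) := lintegral_mono key
    _ = 4 * ∫⁻ x, F x * G x := lintegral_const_mul' 4 _ (by simp)
    _ ≤ 4 * ((∫⁻ x, F x ^ p) ^ (1/p) * (∫⁻ x, G x ^ q) ^ (1/q)) := by
        refine mul_le_mul_right ?_ 4
        simpa using holder
    _ = ENNReal.ofReal 4 * (∫⁻ x, ψ x ^ (2 * p) * ω x) ^ (1 / p) *
        (∫⁻ x, (ω x) ^ (-(1 / (p - 1))) *
          ((∫⁻ y in ball x ε, φ y ^ (2 : ℝ)) / V) ^ (p / (p - 1))) ^ ((p - 1) / p) := by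
        rw [hFp, hGq, ← hqdef, show (p-1)/p = 1/q from by rw [hqdef, one_div, inv_div],
          show ENNReal.ofReal 4 = 4 from by norm_num, mul_assoc]
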